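/- For λ ≠ 0, the *-automorphism Λ of 𝒦 given by Λ(K_n) = K_n + inλC, Λ(C) = C does not extend to a *-automorphism of the Virasoro algebra. -/

import Mathlib

/-- For `λ ≠ 0`, the *-automorphism `Λ` of `𝒦` with `Λ (K n) = K n + i n λ C`, `Λ C = C`
does not extend to a *-automorphism of the Virasoro algebra. -/
theorem stmt7 (W : Type) [LieRing W] [LieAlgebra ℂ W]
    (L : ℤ → W) (Cc : W)
    (b : Module.Basis (ℤ ⊕ Unit) ℂ W)
    (hb1 : ∀ n : ℤ, b (Sum.inl n) = L n) (hb2 : b (Sum.inr ()) = Cc)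
    (hC : ∀ x : W, ⁅Cc, x⁆ = 0)
    (hbr : ∀ m n : ℤ, ⁅L m, L n⁆ = ((m : ℂ) - n) • L (m + n) +
      (if n = -m then (m : ℂ) * ((m : ℂ) ^ 2 - 1) / 12 else 0) • Cc)
    (st : W →ₛₗ[starRingEnd ℂ] W)
    (hstL : ∀ n : ℤ, st (L n) = L (-n)) (hstC : st Cc = Cc)
    (lam : ℝ) (hlam : lam ≠ 0) :
    ¬ ∃ Ψ : W ≃ₗ[ℂ] W, (∀ x y : W, Ψ ⁅x, y⁆ = ⁅Ψ x, Ψ y⁆) ∧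
      (∀ x : W, Ψ (st x) = st (Ψ x)) ∧
      (∀ n : ℤ, n ≠ 0 → Ψ (L n - L 0) = (L n - L 0) + (Complex.I * n * lam) • Cc) ∧
      Ψ Cc = Cc := by
  rintro ⟨Ψ, hbrk, hst, hK, hC'⟩
  set φ : W →ₗ[ℂ] ℂ := b.coord (Sum.inr ()) with hφ
  have hφL : ∀ m : ℤ, φ (L m) = 0 := by
    intro m
    rw [← hb1]
    simp [hφ, Module.Basis.coord_apply, Module.Basis.repr_self, Finsupp.single_apply]
  have hφC : φ Cc = 1 := by
    rw [← hb2]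
    simp [hφ, Module.Basis.coord_apply, Module.Basis.repr_self]
  have hCz : ∀ x : W, ⁅x, Cc⁆ = 0 := by
    intro x
    rw [← lie_skew, hC, neg_zero]
  have key : ∀ k : ℤ, (k : ℂ) * ((k : ℂ) ^ 2 - 1) = 0 → ∀ w : W, φ ⁅L k, w⁆ = 0 := by
    intro k hk
    have hzero : (φ ∘ₗ LieAlgebra.ad ℂ W (L k)) = 0 := by
      apply b.ext
      rintro (m | ⟨⟩)
      · simp only [LinearMap.comp_apply, LieAlgebra.ad_apply, hb1, LinearMap.zero_apply]
        rw [hbr]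
        simp only [map_add, map_smul, hφL, hφC, smul_eq_mul, mul_zero, mul_one, zero_add]
        split_ifs with h
        · rw [div_eq_zero_iff]
          left; exact hk
        · rfl
      · simp only [LinearMap.comp_apply, LieAlgebra.ad_apply, hb2, LinearMap.zero_apply,
          hCz, map_zero]
    intro w
    have := LinearMap.congr_fun hzero w
    simpa using this
  set u : W := Ψ (L 0) - L 0 with hu
  have hΨ0 : Ψ (L 0) = L 0 + u := by rw [hu]; abel
  have hΨn : ∀ n : ℤ, n ≠ 0 → Ψ (L n) = L n + (Complex.I * n * lam) • Cc + u := by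
    intro n hn
    have h := hK n hn
    rw [map_sub, sub_eq_iff_eq_add] at h
    rw [h, hΨ0]
    abel
  have hbr0 : ∀ n : ℤ, n ≠ 0 → ⁅L 0, L n⁆ = (-(n : ℂ)) • L n := by
    intro n hn
    rw [hbr]
    have h0 : ¬ (n = -0) := by simpa using hn
    simp [h0]
  have eqn : ∀ n : ℤ, n ≠ 0 → (n : ℂ) * ((n : ℂ) ^ 2 - 1) = 0 →
      Complex.I * n * lam + φ u = 0 := by
    intro n hn hcube
    have h1 := hbrk (L 0) (L n)
    rw [hbr0 n hn, map_smul, hΨn n hn, hΨ0] at h1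
    have h2 := congrArg φ h1
    have huLn : φ ⁅u, L n⁆ = 0 := by
      rw [← lie_skew, map_neg, key n hcube u, neg_zero]
    have hL0u : φ ⁅L 0, u⁆ = 0 := key 0 (by norm_num) u
    have hL0Ln : φ ⁅L 0, L n⁆ = 0 := by
      rw [hbr0 n hn, map_smul, hφL, smul_zero]
    simp only [map_smul, map_add, add_lie, lie_add, lie_smul, smul_lie, hCz, hC, lie_self,
      smul_zero, add_zero, zero_add, map_zero, hL0Ln, hL0u, huLn, hφC, hφL, smul_eq_mul,
      mul_zero, mul_one] at h2
    have hn' : (n : ℂ) ≠ 0 := Int.cast_ne_zero.mpr hn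
    field_simp at h2
    have h3 : (n : ℂ) * (Complex.I * n * lam + φ u) = 0 := by linear_combination -h2
    exact (mul_eq_zero.mp h3).resolve_left hn'
  have e1 := eqn 1 one_ne_zero (by norm_num)
  have e2 := eqn (-1) (by norm_num) (by norm_num)
  have hIl : Complex.I * lam = 0 := by
    push_cast at e1 e2
    linear_combination (e1 - e2) / 2
  rcases mul_eq_zero.mp hIl with h | h
  · exact Complex.I_ne_zero h
  · exact hlam (by exact_mod_cast h)
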